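/- Let Σ_k and Σ_m be real n×n positive semidefinite matrices with range(Σ_k) = range(Σ_m), and let Φ be a real ℓ×n matrix such that rank(Σ_m^{1/2}·Φᵀ·Φ·Σ_m^{1/2}) = rank(Σ_m). Then lim_{σ²→0⁺} tr(Σ_k·Φᵀ·(σ²·I_ℓ + Φ·Σ_m·Φᵀ)⁻¹·Φ·Σ_m) = tr(Σ_k). -/

import Mathlib

open Matrix Filter Topology

section
open scoped ComplexOrder
/-- The positive semidefinite square root, as `Matrix.PosSemidef.sqrt` was defined in Mathlib
(Dec 2024); it has since been removed from Mathlib. -/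
noncomputable def Matrix.PosSemidef.sqrt {n : Type*} [Fintype n] [DecidableEq n] {𝕜 : Type*}
    [RCLike 𝕜] {A : Matrix n n 𝕜} (hA : A.PosSemidef) : Matrix n n 𝕜 :=
  (hA.1.eigenvectorUnitary : Matrix n n 𝕜) *
    diagonal ((RCLike.ofReal : ℝ → 𝕜) ∘ (√·) ∘ hA.1.eigenvalues) *
    (star hA.1.eigenvectorUnitary : Matrix n n 𝕜)
end

section Aux

lemma aux_sqrt_mul_self {m : ℕ} {A : Matrix (Fin m) (Fin m) ℝ} (hA : A.PosSemidef) :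
    hA.sqrt * hA.sqrt = A := by
  have hU := Unitary.coe_star_mul_self hA.1.eigenvectorUnitary
  have hd : diagonal ((RCLike.ofReal : ℝ → ℝ) ∘ (√·) ∘ hA.1.eigenvalues) *
      diagonal ((RCLike.ofReal : ℝ → ℝ) ∘ (√·) ∘ hA.1.eigenvalues)
      = diagonal ((RCLike.ofReal : ℝ → ℝ) ∘ hA.1.eigenvalues) := by
    rw [diagonal_mul_diagonal]
    congr 1
    funext i
    simp [Real.mul_self_sqrt (hA.eigenvalues_nonneg i)]
  conv_rhs => rw [hA.1.spectral_theorem, Unitary.conjStarAlgAut_apply]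
  unfold Matrix.PosSemidef.sqrt
  calc _ = (hA.1.eigenvectorUnitary : Matrix (Fin m) (Fin m) ℝ) *
        (diagonal ((RCLike.ofReal : ℝ → ℝ) ∘ (√·) ∘ hA.1.eigenvalues) *
        (((star hA.1.eigenvectorUnitary : Matrix (Fin m) (Fin m) ℝ) *
          (hA.1.eigenvectorUnitary : Matrix (Fin m) (Fin m) ℝ)) *
        diagonal ((RCLike.ofReal : ℝ → ℝ) ∘ (√·) ∘ hA.1.eigenvalues))) *
        (star hA.1.eigenvectorUnitary : Matrix (Fin m) (Fin m) ℝ) := by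
        simp only [Matrix.mul_assoc]
  _ = _ := by rw [hU, Matrix.one_mul, hd]

lemma aux_posSemidef_sqrt {m : ℕ} {A : Matrix (Fin m) (Fin m) ℝ} (hA : A.PosSemidef) :
    hA.sqrt.PosSemidef := by
  have hD : (diagonal ((RCLike.ofReal : ℝ → ℝ) ∘ (√·) ∘ hA.1.eigenvalues)).PosSemidef :=
    Matrix.PosSemidef.diagonal (fun i => by simp [Real.sqrt_nonneg])
  have h := hD.mul_mul_conjTranspose_same (hA.1.eigenvectorUnitary : Matrix (Fin m) (Fin m) ℝ)
  unfold Matrix.PosSemidef.sqrt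
  rwa [Matrix.star_eq_conjTranspose]

variable {k : ℕ}

lemma aux_smul_posSemidef {X : Matrix (Fin k) (Fin k) ℝ} (hX : X.PosSemidef) {σ : ℝ}
    (hσ : 0 ≤ σ) : (σ • X).PosSemidef := by
  refine Matrix.PosSemidef.of_dotProduct_mulVec_nonneg ?_ (fun x => ?_)
  · have : (σ • X)ᴴ = σ • Xᴴ := by
      rw [conjTranspose_smul]; simp
    rw [Matrix.IsHermitian, this, hX.1]
  · have h := hX.dotProduct_mulVec_nonneg x
    rw [Matrix.smul_mulVec, dotProduct_smul, smul_eq_mul]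
    exact mul_nonneg hσ h

lemma aux_posDef_smul_one_add {X : Matrix (Fin k) (Fin k) ℝ} (hX : X.PosSemidef) {σ : ℝ}
    (hσ : 0 < σ) : (σ • (1 : Matrix (Fin k) (Fin k) ℝ) + X).PosDef := by
  refine Matrix.PosDef.of_dotProduct_mulVec_pos
    (((aux_smul_posSemidef Matrix.PosSemidef.one hσ.le).1).add hX.1) (fun x hx => ?_)
  have h1 : star x ⬝ᵥ ((σ • (1 : Matrix (Fin k) (Fin k) ℝ) + X) *ᵥ x)
      = σ * (star x ⬝ᵥ x) + star x ⬝ᵥ (X *ᵥ x) := by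
    rw [Matrix.add_mulVec, dotProduct_add, Matrix.smul_mulVec, Matrix.one_mulVec,
      dotProduct_smul, smul_eq_mul]
  rw [h1]
  have h2 : 0 < star x ⬝ᵥ x := dotProduct_star_self_pos_iff.mpr hx
  exact add_pos_of_pos_of_nonneg (mul_pos hσ h2) (hX.dotProduct_mulVec_nonneg x)

lemma aux_exists_factor {p q r : ℕ} (A : Matrix (Fin p) (Fin q) ℝ) (B : Matrix (Fin p) (Fin r) ℝ)
    (h : LinearMap.range A.mulVecLin ≤ LinearMap.range B.mulVecLin) :
    ∃ C : Matrix (Fin r) (Fin q) ℝ, A = B * C := by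
  have hc : ∀ j : Fin q, ∃ c : Fin r → ℝ, B *ᵥ c = A *ᵥ Pi.single j 1 := by
    intro j
    have hm : A *ᵥ Pi.single j 1 ∈ LinearMap.range B.mulVecLin := by
      apply h
      exact ⟨Pi.single j 1, rfl⟩
    obtain ⟨c, hc⟩ := hm
    exact ⟨c, hc⟩
  choose c hc using hc
  refine ⟨Matrix.of (fun i j => c j i), ?_⟩
  ext i j
  have h1 := congrFun (hc j) i
  have h2 : (A *ᵥ Pi.single j 1) i = A i j := by
    rw [Matrix.mulVec_single]; exact mul_one _
  rw [h2] at h1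
  rw [Matrix.mul_apply, ← h1]
  rfl

lemma aux_sq_entry_le {N : Matrix (Fin k) (Fin k) ℝ} (hN : N.PosSemidef) (i j : Fin k) :
    N i j ^ 2 ≤ N i i * N j j := by
  have hsym : N j i = N i j := by
    have h := congrFun (congrFun hN.1 i) j
    simpa [Matrix.conjTranspose_apply] using h
  have key : ∀ t : ℝ, 0 ≤ N j j * (t * t) + (2 * N i j) * t + N i i := by
    intro t
    have h := hN.dotProduct_mulVec_nonneg ((Pi.single i 1 : Fin k → ℝ) + t • (Pi.single j 1 : Fin k → ℝ))
    rw [star_trivial] at h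
    simp only [Matrix.mulVec_add, Matrix.mulVec_smul, dotProduct_add, add_dotProduct,
      dotProduct_smul, smul_dotProduct, single_dotProduct, Matrix.mulVec_single_one, Matrix.col_apply,
      smul_eq_mul, one_mul, mul_one] at h
    rw [hsym] at h
    nlinarith [h]
  have hd := discrim_le_zero key
  rw [discrim] at hd
  nlinarith [hd]

lemma aux_abs_entry_le_one {N : Matrix (Fin k) (Fin k) ℝ} (hN : N.PosSemidef)
    (h1 : ((1 : Matrix (Fin k) (Fin k) ℝ) - N).PosSemidef) (i j : Fin k) : |N i j| ≤ 1 := by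
  have hdiag : ∀ a, N a a ≤ 1 := by
    intro a
    have h := h1.dotProduct_mulVec_nonneg (Pi.single a 1)
    rw [star_trivial] at h
    simp only [Matrix.sub_mulVec, Matrix.one_mulVec, dotProduct_sub,
      single_dotProduct, Matrix.mulVec_single_one, Matrix.col_apply, one_mul, mul_one, Pi.single_eq_same,
      Matrix.sub_apply, Matrix.one_apply_eq] at h
    linarith
  have hd0 : ∀ a, 0 ≤ N a a := by
    intro a
    have h := hN.dotProduct_mulVec_nonneg (Pi.single a 1)
    rw [star_trivial] at h
    simpa [single_dotProduct, Matrix.mulVec_single_one, Matrix.col_apply] using h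
  have hsq := aux_sq_entry_le hN i j
  rw [← sq_le_one_iff_abs_le_one]
  nlinarith [hdiag i, hdiag j, hd0 i, hd0 j]


lemma aux_push {l n : ℕ} (B : Matrix (Fin l) (Fin n) ℝ) (Q : Matrix (Fin n) (Fin n) ℝ)
    (P : Matrix (Fin l) (Fin l) ℝ) (hPdet : IsUnit P.det) (hQdet : IsUnit Q.det)
    (hPB : P * B = B * Q) : P⁻¹ * B = B * Q⁻¹ := by
  have hQR : Q * Q⁻¹ = 1 := Matrix.mul_nonsing_inv Q hQdet
  calc P⁻¹ * B = P⁻¹ * (B * (Q * Q⁻¹)) := by rw [hQR, Matrix.mul_one]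
  _ = P⁻¹ * ((B * Q) * Q⁻¹) := by rw [Matrix.mul_assoc]
  _ = P⁻¹ * ((P * B) * Q⁻¹) := by rw [hPB]
  _ = (P⁻¹ * P) * (B * Q⁻¹) := by simp only [Matrix.mul_assoc]
  _ = B * Q⁻¹ := by rw [Matrix.nonsing_inv_mul P hPdet, Matrix.one_mul]

lemma aux_MR {n : ℕ} (M Q R : Matrix (Fin n) (Fin n) ℝ) (σ : ℝ)
    (hQdef : Q = σ • 1 + M) (hQR : Q * R = 1) :
    M * R = 1 - σ • R := by
  have e : (σ • (1 : Matrix (Fin n) (Fin n) ℝ)) * R = σ • R := by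
    rw [Matrix.smul_mul, Matrix.one_mul]
  have h : σ • R + M * R = 1 := by
    calc σ • R + M * R = (σ • (1 : Matrix (Fin n) (Fin n) ℝ)) * R + M * R := by rw [e]
    _ = Q * R := by rw [← Matrix.add_mul, ← hQdef]
    _ = 1 := hQR
  exact eq_sub_of_add_eq' h

lemma aux_RM {n : ℕ} (M Q R : Matrix (Fin n) (Fin n) ℝ) (σ : ℝ)
    (hQdef : Q = σ • 1 + M) (hRQ : R * Q = 1) :
    R * M = 1 - σ • R := by
  have e : R * (σ • (1 : Matrix (Fin n) (Fin n) ℝ)) = σ • R := by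
    rw [Matrix.mul_smul, Matrix.mul_one]
  have h : σ • R + R * M = 1 := by
    calc σ • R + R * M = R * (σ • (1 : Matrix (Fin n) (Fin n) ℝ)) + R * M := by rw [e]
    _ = R * Q := by rw [← Matrix.mul_add, ← hQdef]
    _ = 1 := hRQ
  exact eq_sub_of_add_eq' h

lemma aux_D {n : ℕ} (M Q R : Matrix (Fin n) (Fin n) ℝ) (σ : ℝ) (hσ : 0 < σ)
    (hM : M.PosSemidef) (hR : R.PosDef) (hQdef : Q = σ • 1 + M)
    (hQR : Q * R = 1) (hRQ : R * Q = 1) :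
    ∀ a b, |(σ • R) a b| ≤ 1 := by
  have hRM := aux_RM M Q R σ hQdef hRQ
  have hD : (σ • R).PosSemidef := aux_smul_posSemidef hR.posSemidef hσ.le
  have h1D : ((1 : Matrix (Fin n) (Fin n) ℝ) - σ • R).PosSemidef := by
    have hMM : (M * M + σ • M).PosSemidef := by
      have h1 : (M * M).PosSemidef := by
        have h := Matrix.posSemidef_conjTranspose_mul_self M
        rwa [hM.1] at h
      exact h1.add (aux_smul_posSemidef hM hσ.le)
    have hconj := hMM.mul_mul_conjTranspose_same R
    have e : R * (M * M + σ • M) * Rᴴ = 1 - σ • R := by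
      rw [hR.1]
      have hMQ : M * M + σ • M = M * Q := by
        rw [hQdef, Matrix.mul_add, Matrix.mul_smul, Matrix.mul_one, add_comm]
      rw [hMQ]
      calc R * (M * Q) * R = (R * M) * (Q * R) := by simp only [Matrix.mul_assoc]
      _ = (R * M) * 1 := by rw [hQR]
      _ = 1 - σ • R := by rw [Matrix.mul_one, hRM]
    rwa [e] at hconj
  exact aux_abs_entry_le_one hD h1D

lemma aux_sigma {n l : ℕ} (Sk Sm S M A C Q R : Matrix (Fin n) (Fin n) ℝ)
    (Φ B : Matrix (Fin l) (Fin n) ℝ) (InvP : Matrix (Fin l) (Fin l) ℝ) (σ : ℝ) (hσ : 0 < σ)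
    (hSS : S * S = Sm) (hSkA : Sk = Aᵀ * Sm) (hC : S = M * C)
    (hMdef : M = S * Φᵀ * Φ * S) (hBdef : B = Φ * S)
    (hQdef : Q = σ • 1 + M) (hQR : Q * R = 1) (hRQ : R * Q = 1)
    (hInvB : InvP * B = B * R)
    (hDbound : ∀ a b, |(σ • R) a b| ≤ 1) :
    |(Sk * Φᵀ * InvP * Φ * Sm).trace - Sk.trace|
      ≤ σ * (|(Aᵀ * (S * C)).trace| + ∑ i, ∑ j, |(C * (Aᵀ * S)) i j|) := by
  have hMR := aux_MR M Q R σ hQdef hQR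
  have hRM := aux_RM M Q R σ hQdef hRQ
  have hΦSm : Φ * Sm = B * S := by rw [hBdef, ← hSS, Matrix.mul_assoc]
  have hMRM : M * (R * M) = M - σ • (1 : Matrix (Fin n) (Fin n) ℝ) + σ • (σ • R) := by
    rw [show M * (R * M) = (M * R) * M from by rw [Matrix.mul_assoc], hMR,
      Matrix.sub_mul, Matrix.one_mul, Matrix.smul_mul, hRM]
    rw [smul_sub]
    abel
  have hmat : Sk * Φᵀ * InvP * Φ * Sm
      = Sk - σ • (Aᵀ * (S * C)) + σ • (Aᵀ * (S * ((σ • R) * C))) := by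
    have step1 : Sk * Φᵀ * InvP * Φ * Sm = Aᵀ * (S * (M * (R * S))) := by
      calc Sk * Φᵀ * InvP * Φ * Sm = Sk * Φᵀ * (InvP * (Φ * Sm)) := by
            simp only [Matrix.mul_assoc]
      _ = Sk * Φᵀ * (InvP * (B * S)) := by rw [hΦSm]
      _ = Sk * Φᵀ * ((InvP * B) * S) := by simp only [Matrix.mul_assoc]
      _ = Sk * Φᵀ * ((B * R) * S) := by rw [hInvB]
      _ = (Aᵀ * Sm) * Φᵀ * ((B * R) * S) := by rw [← hSkA]
      _ = Aᵀ * (S * (M * (R * S))) := by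
            rw [← hSS, hBdef, hMdef]
            simp only [Matrix.mul_assoc]
    have step2 : M * (R * S)
        = (M - σ • (1 : Matrix (Fin n) (Fin n) ℝ) + σ • (σ • R)) * C := by
      conv_lhs => rw [hC]
      calc M * (R * (M * C)) = (M * (R * M)) * C := by simp only [Matrix.mul_assoc]
      _ = (M - σ • (1 : Matrix (Fin n) (Fin n) ℝ) + σ • (σ • R)) * C := by rw [hMRM]
    rw [step1, step2]
    have expand : (M - σ • (1 : Matrix (Fin n) (Fin n) ℝ) + σ • (σ • R)) * C
        = S - σ • C + σ • ((σ • R) * C) := by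
      rw [Matrix.add_mul, Matrix.sub_mul, Matrix.smul_mul, Matrix.smul_mul,
        Matrix.one_mul, ← hC]
    rw [expand]
    rw [Matrix.mul_add, Matrix.mul_sub, Matrix.mul_add, Matrix.mul_sub]
    rw [Matrix.mul_smul, Matrix.mul_smul, Matrix.mul_smul, Matrix.mul_smul]
    rw [hSS, ← hSkA]
  rw [hmat]
  rw [Matrix.trace_add, Matrix.trace_sub, Matrix.trace_smul, Matrix.trace_smul]
  have htr3 : (Aᵀ * (S * ((σ • R) * C))).trace = ((C * (Aᵀ * S)) * (σ • R)).trace := by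
    calc (Aᵀ * (S * ((σ • R) * C))).trace = ((Aᵀ * (S * (σ • R))) * C).trace := by
          simp only [Matrix.mul_assoc]
    _ = (C * (Aᵀ * (S * (σ • R)))).trace := by rw [Matrix.trace_mul_comm]
    _ = ((C * (Aᵀ * S)) * (σ • R)).trace := by simp only [Matrix.mul_assoc]
  have htr3bound : |((C * (Aᵀ * S)) * (σ • R)).trace| ≤ ∑ i, ∑ j, |(C * (Aᵀ * S)) i j| := by
    calc |((C * (Aᵀ * S)) * (σ • R)).trace|
        = |∑ i, ∑ j, (C * (Aᵀ * S)) i j * (σ • R) j i| := by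
          simp only [Matrix.trace, Matrix.diag, Matrix.mul_apply]
    _ ≤ ∑ i, |∑ j, (C * (Aᵀ * S)) i j * (σ • R) j i| := Finset.abs_sum_le_sum_abs _ _
    _ ≤ ∑ i, ∑ j, |(C * (Aᵀ * S)) i j| := by
          apply Finset.sum_le_sum
          intro i _
          calc |∑ j, (C * (Aᵀ * S)) i j * (σ • R) j i|
              ≤ ∑ j, |(C * (Aᵀ * S)) i j * (σ • R) j i| := Finset.abs_sum_le_sum_abs _ _
          _ ≤ ∑ j, |(C * (Aᵀ * S)) i j| := by
                apply Finset.sum_le_sum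
                intro j _
                rw [abs_mul]
                exact mul_le_of_le_one_right (abs_nonneg _) (hDbound j i)
  rw [htr3]
  have heq : Sk.trace - σ • (Aᵀ * (S * C)).trace + σ • ((C * (Aᵀ * S)) * (σ • R)).trace
      - Sk.trace = σ * (((C * (Aᵀ * S)) * (σ • R)).trace - (Aᵀ * (S * C)).trace) := by
    simp only [smul_eq_mul]; ring
  rw [heq, abs_mul, abs_of_pos hσ]
  apply mul_le_mul_of_nonneg_left ?_ hσ.le
  calc |((C * (Aᵀ * S)) * (σ • R)).trace - (Aᵀ * (S * C)).trace|
      ≤ |((C * (Aᵀ * S)) * (σ • R)).trace| + |(Aᵀ * (S * C)).trace| := abs_sub _ _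
  _ ≤ |(Aᵀ * (S * C)).trace| + ∑ i, ∑ j, |(C * (Aᵀ * S)) i j| := by
      linarith [htr3bound]

end Aux


/-- If range(Σ_k) = range(Σ_m) and rank(Σ_m^{1/2}·Φᵀ·Φ·Σ_m^{1/2}) = rank(Σ_m),
then tr(Σ_k·Φᵀ·(σ²·I + Φ·Σ_m·Φᵀ)⁻¹·Φ·Σ_m) → tr(Σ_k) as σ² → 0⁺. -/
theorem stmt_14 {n l : ℕ} (Sk Sm : Matrix (Fin n) (Fin n) ℝ)
    (hSk : Sk.PosSemidef) (hSm : Sm.PosSemidef)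
    (hrange : LinearMap.range Sk.mulVecLin = LinearMap.range Sm.mulVecLin)
    (Φ : Matrix (Fin l) (Fin n) ℝ)
    (hrank : (hSm.sqrt * Φᵀ * Φ * hSm.sqrt).rank = Sm.rank) :
    Tendsto (fun σ2 : ℝ =>
        (Sk * Φᵀ * (σ2 • (1 : Matrix (Fin l) (Fin l) ℝ) + Φ * Sm * Φᵀ)⁻¹ * Φ * Sm).trace)
      (nhdsWithin 0 (Set.Ioi 0)) (nhds Sk.trace) := by
  classical
  set S : Matrix (Fin n) (Fin n) ℝ := hSm.sqrt with hSdef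
  have hS : S.PosSemidef := aux_posSemidef_sqrt hSm
  have hSS : S * S = Sm := aux_sqrt_mul_self hSm
  have hSt : Sᵀ = S := by
    rw [← Matrix.conjTranspose_eq_transpose_of_trivial]; exact hS.1
  set M : Matrix (Fin n) (Fin n) ℝ := S * Φᵀ * Φ * S with hMdef
  have hMt : Mᵀ = M := by
    rw [hMdef]
    simp only [Matrix.transpose_mul, Matrix.transpose_transpose, hSt, Matrix.mul_assoc]
  have hM : M.PosSemidef := by
    have h := Matrix.posSemidef_conjTranspose_mul_self (Φ * S)
    have e : (Φ * S)ᴴ * (Φ * S) = M := by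
      rw [Matrix.conjTranspose_eq_transpose_of_trivial, Matrix.transpose_mul, hSt, hMdef]
      simp only [Matrix.mul_assoc]
    rwa [e] at h
  -- range facts
  have hrSm_le : LinearMap.range Sm.mulVecLin ≤ LinearMap.range S.mulVecLin := by
    rw [← hSS, Matrix.mulVecLin_mul]
    exact LinearMap.range_comp_le_range _ _
  have hrankSmS : Sm.rank = S.rank := by
    conv_lhs => rw [← hSS, show S * S = Sᵀ * S from by rw [hSt]]
    exact Matrix.rank_transpose_mul_self S
  have hrS : LinearMap.range Sm.mulVecLin = LinearMap.range S.mulVecLin := by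
    apply Submodule.eq_of_le_of_finrank_le hrSm_le
    show S.rank ≤ Sm.rank
    rw [hrankSmS]
  have hrM_le : LinearMap.range M.mulVecLin ≤ LinearMap.range S.mulVecLin := by
    have e : M = S * (Φᵀ * Φ * S) := by rw [hMdef]; simp only [Matrix.mul_assoc]
    rw [e, Matrix.mulVecLin_mul]
    exact LinearMap.range_comp_le_range _ _
  have hrM : LinearMap.range M.mulVecLin = LinearMap.range S.mulVecLin := by
    apply Submodule.eq_of_le_of_finrank_le hrM_le
    show S.rank ≤ M.rank
    rw [hrank, hrankSmS]
  obtain ⟨A, hA⟩ : ∃ A, Sk = Sm * A := aux_exists_factor Sk Sm (le_of_eq hrange)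
  obtain ⟨C, hC⟩ : ∃ C, S = M * C := aux_exists_factor S M (by rw [hrM])
  have hSkt : Skᵀ = Sk := by
    rw [← Matrix.conjTranspose_eq_transpose_of_trivial]; exact hSk.1
  have hSmT : Smᵀ = Sm := by
    rw [← Matrix.conjTranspose_eq_transpose_of_trivial]; exact hSm.1
  have hSkA : Sk = Aᵀ * Sm := by
    conv_lhs => rw [← hSkt, hA]
    rw [Matrix.transpose_mul, hSmT]
  -- constants
  set X : Matrix (Fin n) (Fin n) ℝ := C * (Aᵀ * S) with hXdef
  set K : ℝ := ∑ i, ∑ j, |X i j| with hKdef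
  set T1 : ℝ := (Aᵀ * (S * C)).trace with hT1def
  -- key estimate
  have key : ∀ σ : ℝ, σ ∈ Set.Ioi (0:ℝ) →
      |(Sk * Φᵀ * (σ • (1 : Matrix (Fin l) (Fin l) ℝ) + Φ * Sm * Φᵀ)⁻¹ * Φ * Sm).trace
        - Sk.trace| ≤ σ * (|T1| + K) := by
    intro σ hσ
    rw [Set.mem_Ioi] at hσ
    have hQ : (σ • 1 + M).PosDef := aux_posDef_smul_one_add hM hσ
    have hQdet : IsUnit (σ • 1 + M).det := hQ.det_pos.ne'.isUnit
    have hR : ((σ • 1 + M)⁻¹).PosDef := hQ.inv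
    have hQR : (σ • 1 + M) * (σ • 1 + M)⁻¹ = 1 := Matrix.mul_nonsing_inv _ hQdet
    have hRQ : (σ • 1 + M)⁻¹ * (σ • 1 + M) = 1 := Matrix.nonsing_inv_mul _ hQdet
    have hDbound := aux_D M (σ • 1 + M) (σ • 1 + M)⁻¹ σ hσ hM hR rfl hQR hRQ
    have hP : (σ • (1 : Matrix (Fin l) (Fin l) ℝ) + Φ * Sm * Φᵀ).PosDef := by
      have hBBt : Φ * Sm * Φᵀ = (Φ * S) * (Φ * S)ᵀ := by
        rw [Matrix.transpose_mul, hSt, ← hSS]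
        simp only [Matrix.mul_assoc]
      rw [hBBt]
      apply aux_posDef_smul_one_add ?_ hσ
      have h := Matrix.posSemidef_self_mul_conjTranspose (Φ * S)
      rwa [Matrix.conjTranspose_eq_transpose_of_trivial] at h
    have hPdet : IsUnit (σ • (1 : Matrix (Fin l) (Fin l) ℝ) + Φ * Sm * Φᵀ).det :=
      hP.det_pos.ne'.isUnit
    have hPB : (σ • (1 : Matrix (Fin l) (Fin l) ℝ) + Φ * Sm * Φᵀ) * (Φ * S)
        = (Φ * S) * (σ • 1 + M) := by
      rw [hMdef, ← hSS]
      simp only [Matrix.add_mul, Matrix.mul_add, Matrix.smul_mul, Matrix.mul_smul,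
        Matrix.one_mul, Matrix.mul_one, Matrix.mul_assoc]
    have hInvB := aux_push (Φ * S) (σ • 1 + M)
      (σ • (1 : Matrix (Fin l) (Fin l) ℝ) + Φ * Sm * Φᵀ) hPdet hQdet hPB
    exact aux_sigma Sk Sm S M A C (σ • 1 + M) (σ • 1 + M)⁻¹ Φ (Φ * S)
      (σ • (1 : Matrix (Fin l) (Fin l) ℝ) + Φ * Sm * Φᵀ)⁻¹ σ hσ
      hSS hSkA hC hMdef rfl rfl hQR hRQ hInvB hDbound
  -- conclude via squeeze
  rw [tendsto_iff_dist_tendsto_zero]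
  have hbound : Tendsto (fun σ : ℝ => σ * (|T1| + K)) (nhdsWithin 0 (Set.Ioi 0)) (nhds 0) := by
    have h : Tendsto (fun σ : ℝ => σ * (|T1| + K)) (nhds 0) (nhds (0 * (|T1| + K))) :=
      tendsto_id.mul tendsto_const_nhds
    rw [zero_mul] at h
    exact h.mono_left nhdsWithin_le_nhds
  apply squeeze_zero' (eventually_nhdsWithin_of_forall (fun σ _ => dist_nonneg)) ?_ hbound
  apply eventually_nhdsWithin_of_forall
  intro σ hσ
  rw [Real.dist_eq]
  exact key σ hσ
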